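/- With the construction S^Ev as above (generated by t and the h_x, x ∈ S, acting on B^Ev = B × {0,...,n}): any product of generators containing at least two occurrences of elements h_x, h_y (x, y ∈ S) separated by powers of t, namely w = tᵏ h_x tˡ h_y, is either the empty partial function or has image a single point of B^Ev. Specifically, tᵏ h_x tˡ h_y is nonempty iff l ∈ Dom(y) and l ∈ Im(x), and in that case its image is {(ly, 0)}. -/

import Mathlib

/-- `G`-labeled partial functions on `Q`. -/
def LPF (Q G : Type*) := Q → Option (Q × G)

/-- Composition (left-to-right) of labeled partial functions. -/
def LPF.mul {Q G : Type*} [Mul G] (f g : LPF Q G) : LPF Q G :=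
  fun q => (f q).bind fun p => (g p.1).map fun r => (r.1, p.2 * r.2)

/-- The identity labeled partial function. -/
def LPF.one {Q G : Type*} [One G] : LPF Q G := fun q => some (q, 1)

/-- Powers of a labeled partial function. -/
def LPF.pow {Q G : Type*} [Monoid G] (f : LPF Q G) : ℕ → LPF Q G
  | 0 => LPF.one
  | k + 1 => LPF.mul (LPF.pow f k) f

variable {n : ℕ} {G : Type*}

/-- The clock `t : (i, j) ↦ (i, j + 1 mod n+1)`, with trivial labels. -/
def tEl [One G] : LPF (Fin n × Fin (n + 1)) G :=
  fun p => some ((p.1, p.2 + 1), 1)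

/-- The generator `h_x` of `S^Ev`. -/
def hEl [Mul G] (x : Fin n → Option (Fin n × G)) : LPF (Fin n × Fin (n + 1)) G :=
  fun p => if p.2 = Fin.succ p.1 then
    (x p.1).map (fun q => ((q.1, (0 : Fin (n + 1))), q.2)) else none

open scoped Fin.NatCast Fin.CommRing

lemma pow_tEl [Monoid G] (k : ℕ) (p : Fin n × Fin (n + 1)) :
    LPF.pow (tEl (G := G)) k p = some ((p.1, p.2 + (k : Fin (n + 1))), 1) := by
  induction k with
  | zero => simp [LPF.pow, LPF.one]
  | succ k ih =>
    simp only [LPF.pow, LPF.mul, ih, Option.bind_some, tEl, Option.map_some, mul_one, one_mul]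
    have : p.2 + (k : Fin (n + 1)) + 1 = p.2 + ((k + 1 : ℕ) : Fin (n + 1)) := by
      push_cast; ring
    simp [this]

lemma succ_cond (a l : Fin n) :
    ((((l : ℕ) + 1 : ℕ) : Fin (n + 1)) = Fin.succ a) ↔ a = l := by
  rw [Fin.ext_iff, Fin.ext_iff, Fin.val_cast_of_lt (by omega : (l : ℕ) + 1 < n + 1)]
  simp [Fin.val_succ]
  omega

lemma w_eq [Group G] (k : ℕ) (l : Fin n) (x y : Fin n → Option (Fin n × G))
    (p : Fin n × Fin (n + 1)) :
    (LPF.mul (LPF.mul (LPF.mul (LPF.pow (tEl (G := G)) k) (hEl x))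
        (LPF.pow (tEl (G := G)) ((l : ℕ) + 1))) (hEl y)) p
    = if p.2 + (k : Fin (n + 1)) = Fin.succ p.1 then
        (x p.1).bind (fun az => if az.1 = l then
          (y l).map (fun r => ((r.1, (0 : Fin (n + 1))), az.2 * r.2)) else none)
      else none := by
  simp only [LPF.mul, pow_tEl, Option.bind_some, hEl]
  split
  · rcases hx : x p.1 with _ | ⟨a, gx⟩
    · simp [hx]
    · by_cases hal : a = l
      · subst hal
        rcases hy : y a with _ | ⟨m, gl⟩ <;>
          simp [hx, hy, succ_cond, pow_tEl]
      · simp [hx, succ_cond, hal, pow_tEl]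
        exact fun h => absurd h.symm hal
  · simp

/-- The product `tᵏ h_x tˡ h_y` (`l ∈ B`, so the clock power is `l + 1` in our
0-based indexing) is nonempty iff `l ∈ Im(x)` and `l ∈ Dom(y)`, and in that case
its image is the single point `(l y, 0)` with label `g_{i,x} g_{l,y}`. -/
theorem tk_hx_tl_hy [Group G] (hn : 1 ≤ n) (k : ℕ) (l : Fin n)
    (x y : Fin n → Option (Fin n × G)) :
    (letI w := LPF.mul (LPF.mul (LPF.mul (LPF.pow (tEl (G := G)) k) (hEl x))
        (LPF.pow (tEl (G := G)) ((l : ℕ) + 1))) (hEl y)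
     ((∃ p, w p ≠ none) ↔ (∃ i : Fin n, ∃ g : G, x i = some (l, g)) ∧ y l ≠ none) ∧
     (∀ p q, w p = some q →
        (∃ gl : G, ∃ m : Fin n, y l = some (m, gl) ∧ q.1 = (m, (0 : Fin (n + 1)))) ∧
        (∃ i gx gl m, x i = some (l, gx) ∧ y l = some (m, gl) ∧ q.2 = gx * gl))) := by
  constructor
  · constructor
    · rintro ⟨p, hp⟩
      rw [w_eq] at hp
      split at hp
      · rcases hx : x p.1 with _ | ⟨a, gx⟩
        · rw [hx] at hp; simp at hp
        · rw [hx, Option.bind_some] at hp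
          by_cases hal : a = l
          · subst hal
            rw [if_pos rfl] at hp
            refine ⟨⟨p.1, gx, hx⟩, ?_⟩
            intro hy; rw [hy] at hp; simp at hp
          · rw [if_neg hal] at hp; simp at hp
      · simp at hp
    · rintro ⟨⟨i, g, hx⟩, hy⟩
      refine ⟨(i, Fin.succ i - (k : Fin (n + 1))), ?_⟩
      rw [w_eq]
      simp only [sub_add_cancel, if_pos rfl, hx, Option.bind_some]
      rcases hyv : y l with _ | ⟨m, gl⟩
      · exact absurd hyv hy
      · simp
  · intro p q hq
    rw [w_eq] at hq
    split at hq
    · rcases hx : x p.1 with _ | ⟨a, gx⟩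
      · rw [hx] at hq; simp at hq
      · rw [hx, Option.bind_some] at hq
        by_cases hal : a = l
        · subst hal
          rw [if_pos rfl] at hq
          rcases hyv : y a with _ | ⟨m, gl⟩
          · rw [hyv] at hq; simp at hq
          · rw [hyv] at hq
            simp only [Option.map_some, Option.some.injEq] at hq
            obtain rfl := hq
            exact ⟨⟨gl, m, rfl, rfl⟩, ⟨p.1, gx, gl, m, hx, rfl, rfl⟩⟩
        · rw [if_neg hal] at hq; simp at hq
    · simp at hq
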